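/- Let G be a C_6-saturated graph on n ≥ 6 vertices with minimum degree 2 such that every vertex of degree 2 lying in a triangle has no neighbor of degree 2 (i.e., T_2(G) = ∅). Then either G has a vertex of degree 2 not contained in any triangle, or e(G) ≥ 4n/3 - 2. -/

import Mathlib

open SimpleGraph

/-- The graph obtained from `G` by adding the edge `uv`. -/
def addEdge {V : Type*} (G : SimpleGraph V) (u v : V) : SimpleGraph V :=
  G ⊔ SimpleGraph.fromEdgeSet {s(u, v)}

/-- `G` contains a cycle of length `k`. -/
def HasCycleLen {V : Type*} (G : SimpleGraph V) (k : ℕ) : Prop :=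
  ∃ (v : V) (c : G.Walk v v), c.IsCycle ∧ c.length = k

/-- `G` is `C_k`-saturated. -/
def IsCSaturated {V : Type*} (k : ℕ) (G : SimpleGraph V) : Prop :=
  ¬ HasCycleLen G k ∧ ∀ u v : V, u ≠ v → ¬ G.Adj u v → HasCycleLen (addEdge G u v) k

/-- degree of a vertex. -/
noncomputable def degOf {V : Type*} (G : SimpleGraph V) (v : V) : ℕ :=
  (G.neighborSet v).ncard

/-- `v` lies in a triangle of `G`. -/
def InTriangle {V : Type*} (G : SimpleGraph V) (v : V) : Prop :=
  ∃ a b, G.Adj v a ∧ G.Adj v b ∧ G.Adj a b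

/-- `T₂(G)`: degree-2 vertices in a triangle having a degree-2 neighbour. -/
def T2set {V : Type*} (G : SimpleGraph V) : Set V :=
  {v | degOf G v = 2 ∧ InTriangle G v ∧ ∃ w, G.Adj v w ∧ degOf G w = 2}

lemma addEdge_adj {V : Type*} (G : SimpleGraph V) {x y : V} (hxy : x ≠ y) (a b : V) :
    (addEdge G x y).Adj a b ↔ G.Adj a b ∨ (a = x ∧ b = y) ∨ (a = y ∧ b = x) := by
  simp only [addEdge, sup_adj, fromEdgeSet_adj, Set.mem_singleton_iff, Sym2.eq_iff]
  constructor
  · rintro (h | ⟨(⟨rfl, rfl⟩ | ⟨rfl, rfl⟩), -⟩) <;> tauto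
  · rintro (h | ⟨rfl, rfl⟩ | ⟨rfl, rfl⟩)
    · exact Or.inl h
    · exact Or.inr ⟨Or.inl ⟨rfl, rfl⟩, hxy⟩
    · exact Or.inr ⟨Or.inr ⟨rfl, rfl⟩, hxy.symm⟩

lemma exists_path5 {V : Type*} (G : SimpleGraph V) {x y : V} (hxy : x ≠ y)
    (hnadj : ¬ G.Adj x y) (hfree : ¬ HasCycleLen G 6)
    (h6 : HasCycleLen (addEdge G x y) 6) :
    ∃ w1 w2 w3 w4 : V, G.Adj x w1 ∧ G.Adj w1 w2 ∧ G.Adj w2 w3 ∧ G.Adj w3 w4 ∧ G.Adj w4 y ∧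
      w1 ≠ w4 ∧ w2 ≠ x ∧ w2 ≠ y ∧ w2 ≠ w4 ∧ w3 ≠ x ∧ w3 ≠ y ∧ w3 ≠ w1 := by
  classical
  obtain ⟨v, c, hcyc, hlen⟩ := h6
  by_cases hmem : s(x, y) ∈ c.edges
  · have hx : x ∈ c.support := c.fst_mem_support_of_mem_edges hmem
    have hlenrot : (c.rotate x hx).length = 6 := by
      rw [Walk.length_rotate]
      exact hlen
    obtain ⟨c', hcyc', hlen', hmem'⟩ :
        ∃ c' : (addEdge G x y).Walk x x, c'.IsCycle ∧ c'.length = 6 ∧ s(x, y) ∈ c'.edges :=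
      ⟨c.rotate x hx, hcyc.rotate hx, hlenrot, (Walk.rotate_edges c x hx).mem_iff.mpr hmem⟩
    clear hlenrot hmem hx hcyc hlen c
    cases c' with
    | nil => simp at hlen'
    | cons h1 p1 =>
      rename_i u1
      cases p1 with
      | nil => simp at hlen'
      | cons h2 p2 =>
        rename_i u2
        cases p2 with
        | nil => simp at hlen'
        | cons h3 p3 =>
          rename_i u3
          cases p3 with
          | nil => simp at hlen'
          | cons h4 p4 =>
            rename_i u4
            cases p4 with
            | nil => simp at hlen'
            | cons h5 p5 =>
              rename_i u5
              cases p5 with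
              | nil => simp at hlen'
              | cons h6 p6 =>
               rename_i u6
               cases p6 with
               | cons h7 p7 => simp only [Walk.length_cons] at hlen'; omega
               | nil =>
                have hnd := hcyc'.support_nodup
                simp only [Walk.support_cons, Walk.support_nil, List.tail_cons,
                  List.nodup_cons, List.mem_cons, List.mem_singleton,
                  List.not_mem_nil, or_false, List.nodup_nil, not_or, and_true] at hnd
                obtain ⟨⟨h12, h13, h14, h15, h1x⟩, ⟨h23, h24, h25, h2x⟩,
                  ⟨h34, h35, h3x⟩, ⟨h45, h4x⟩, h5x, -⟩ := hnd
                simp only [Walk.edges_cons, Walk.edges_nil, List.mem_cons,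
                  List.not_mem_nil, or_false] at hmem'
                rcases hmem' with h | h | h | h | h | h <;> rw [Sym2.eq_iff] at h
                · rcases h with ⟨-, rfl⟩ | ⟨rfl, rfl⟩
                  · -- y = u1
                    have g2 : G.Adj y u2 := by
                      rcases (addEdge_adj G hxy _ _).mp h2 with g | ⟨h', -⟩ | ⟨-, h'⟩
                      · exact g
                      · exact absurd h' h1x
                      · exact absurd h' h2x
                    have g3 : G.Adj u2 u3 := by
                      rcases (addEdge_adj G hxy _ _).mp h3 with g | ⟨h', -⟩ | ⟨-, h'⟩
                      · exact g
                      · exact absurd h' h2x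
                      · exact absurd h' h3x
                    have g4 : G.Adj u3 u4 := by
                      rcases (addEdge_adj G hxy _ _).mp h4 with g | ⟨h', -⟩ | ⟨-, h'⟩
                      · exact g
                      · exact absurd h' h3x
                      · exact absurd h' h4x
                    have g5 : G.Adj u4 u5 := by
                      rcases (addEdge_adj G hxy _ _).mp h5 with g | ⟨h', -⟩ | ⟨-, h'⟩
                      · exact g
                      · exact absurd h' h4x
                      · exact absurd h' h5x
                    have g6 : G.Adj u5 x := by
                      rcases (addEdge_adj G hxy _ _).mp h6 with g | ⟨h', -⟩ | ⟨h', -⟩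
                      · exact g
                      · exact absurd h' h5x
                      · exact absurd h'.symm h15
                    exact ⟨u5, u4, u3, u2, g6.symm, g5.symm, g4.symm, g3.symm, g2.symm,
                      Ne.symm h25, h4x, Ne.symm h14, Ne.symm h24, h3x, Ne.symm h13, h35⟩
                  · exact absurd rfl hxy
                · rcases h with ⟨h', -⟩ | ⟨h', -⟩
                  · exact absurd h'.symm h1x
                  · exact absurd h'.symm h2x
                · rcases h with ⟨h', -⟩ | ⟨h', -⟩
                  · exact absurd h'.symm h2x
                  · exact absurd h'.symm h3x
                · rcases h with ⟨h', -⟩ | ⟨h', -⟩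
                  · exact absurd h'.symm h3x
                  · exact absurd h'.symm h4x
                · rcases h with ⟨h', -⟩ | ⟨h', -⟩
                  · exact absurd h'.symm h4x
                  · exact absurd h'.symm h5x
                · rcases h with ⟨h', -⟩ | ⟨-, rfl⟩
                  · exact absurd h'.symm h5x
                  · -- y = u5
                    have g1 : G.Adj x u1 := by
                      rcases (addEdge_adj G hxy _ _).mp h1 with g | ⟨-, h'⟩ | ⟨h', -⟩
                      · exact g
                      · exact absurd h' h15
                      · exact absurd h' hxy
                    have g2 : G.Adj u1 u2 := by
                      rcases (addEdge_adj G hxy _ _).mp h2 with g | ⟨h', -⟩ | ⟨-, h'⟩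
                      · exact g
                      · exact absurd h' h1x
                      · exact absurd h' h2x
                    have g3 : G.Adj u2 u3 := by
                      rcases (addEdge_adj G hxy _ _).mp h3 with g | ⟨h', -⟩ | ⟨-, h'⟩
                      · exact g
                      · exact absurd h' h2x
                      · exact absurd h' h3x
                    have g4 : G.Adj u3 u4 := by
                      rcases (addEdge_adj G hxy _ _).mp h4 with g | ⟨h', -⟩ | ⟨-, h'⟩
                      · exact g
                      · exact absurd h' h3x
                      · exact absurd h' h4x
                    have g5 : G.Adj u4 y := by
                      rcases (addEdge_adj G hxy _ _).mp h5 with g | ⟨h', -⟩ | ⟨-, h'⟩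
                      · exact g
                      · exact absurd h' h4x
                      · exact absurd h' h5x
                    exact ⟨u1, u2, u3, u4, g1, g2, g3, g4, g5,
                      h14, h2x, h25, h24, h3x, h35, Ne.symm h13⟩
  · have hsub : ∀ e ∈ c.edges, e ∈ G.edgeSet := by
      intro e he
      have hE : e ∈ (addEdge G x y).edgeSet := c.edges_subset_edgeSet he
      rw [addEdge, edgeSet_sup, edgeSet_fromEdgeSet] at hE
      rcases hE with h | ⟨h1', -⟩
      · exact h
      · rw [Set.mem_singleton_iff] at h1'
        exact absurd (h1' ▸ he) hmem
    exact absurd ⟨v, c.transfer G hsub, hcyc.transfer hsub,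
      by rw [Walk.length_transfer]; exact hlen⟩ hfree

lemma root_struct {V : Type*} [Fintype V] {G : SimpleGraph V} (hT2 : T2set G = ∅) {v u : V}
    (hv2 : degOf G v = 2) (hvt : InTriangle G v) (hu : G.Adj v u) :
    ∃ b, G.neighborSet v = {u, b} ∧ u ≠ b ∧ G.Adj u b ∧ G.Adj v b ∧ degOf G b ≠ 2 := by
  obtain ⟨a, c, hva, hvc, hac⟩ := hvt
  have hne : a ≠ c := hac.ne
  have hsub : ({a, c} : Set V) ⊆ G.neighborSet v := by
    rintro z (rfl | rfl)
    exacts [hva, hvc]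
  have hNv : ({a, c} : Set V) = G.neighborSet v :=
    Set.eq_of_subset_of_ncard_le hsub
      (by rw [Set.ncard_pair hne]; exact le_of_eq hv2) (Set.toFinite _)
  have hT2' : ∀ w, G.Adj v w → degOf G w ≠ 2 := by
    intro w hw hw2
    have hvmem : v ∈ T2set G := ⟨hv2, ⟨a, c, hva, hvc, hac⟩, w, hw, hw2⟩
    rw [hT2] at hvmem
    exact hvmem
  have humem : u ∈ ({a, c} : Set V) := by rw [hNv]; exact hu
  simp only [Set.mem_insert_iff, Set.mem_singleton_iff] at humem
  rcases humem with rfl | rfl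
  · exact ⟨c, hNv.symm, hne, hac, hvc, hT2' c hvc⟩
  · refine ⟨a, ?_, hne.symm, hac.symm, hva, hT2' a hva⟩
    rw [← hNv, Set.pair_comm]

lemma deg3_not_two_roots {V : Type*} [Fintype V] {G : SimpleGraph V} (hG : IsCSaturated 6 G)
    (hT2 : T2set G = ∅) {u v1 v2 : V}
    (h1 : G.Adj u v1) (h2 : G.Adj u v2) (hv12 : v1 ≠ v2)
    (hr1 : degOf G v1 = 2) (hr2 : degOf G v2 = 2)
    (ht1 : InTriangle G v1) (ht2 : InTriangle G v2)
    (hu3 : degOf G u = 3) : False := by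
  obtain ⟨b1, hN1, hub1, hadj1, hv1b1, hb1deg⟩ := root_struct hT2 hr1 ht1 h1.symm
  obtain ⟨b2, hN2, hub2, hadj2, hv2b2, hb2deg⟩ := root_struct hT2 hr2 ht2 h2.symm
  have hb1v1 : b1 ≠ v1 := fun h => hb1deg (by rw [h]; exact hr1)
  have hb1v2 : b1 ≠ v2 := fun h => hb1deg (by rw [h]; exact hr2)
  have hb2v1 : b2 ≠ v1 := fun h => hb2deg (by rw [h]; exact hr1)
  have hb2v2 : b2 ≠ v2 := fun h => hb2deg (by rw [h]; exact hr2)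
  have hsub : ({v1, v2, b1} : Set V) ⊆ G.neighborSet u := by
    rintro z (rfl | rfl | rfl)
    exacts [h1, h2, hadj1]
  have hcard3 : ({v1, v2, b1} : Set V).ncard = 3 := by
    rw [Set.ncard_insert_of_notMem (by simp [hv12, Ne.symm hb1v1]) (Set.toFinite _),
      Set.ncard_pair (Ne.symm hb1v2)]
  have hNu : ({v1, v2, b1} : Set V) = G.neighborSet u :=
    Set.eq_of_subset_of_ncard_le hsub
      (by rw [hcard3]; exact le_of_eq hu3) (Set.toFinite _)
  have hb2mem : b2 ∈ ({v1, v2, b1} : Set V) := by rw [hNu]; exact hadj2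
  have hb2b1 : b2 = b1 := by
    simp only [Set.mem_insert_iff, Set.mem_singleton_iff] at hb2mem
    rcases hb2mem with h | h | h
    exacts [absurd h hb2v1, absurd h hb2v2, h]
  subst hb2b1
  have hnadj : ¬ G.Adj v1 v2 := by
    intro h
    have hmm : v2 ∈ G.neighborSet v1 := h
    rw [hN1] at hmm
    simp only [Set.mem_insert_iff, Set.mem_singleton_iff] at hmm
    rcases hmm with h' | h'
    · exact h2.ne h'.symm
    · exact hb1v2 h'.symm
  obtain ⟨w1, w2, w3, w4, a1, a2, a3, a4, a5, d14, d2x, d2y, d24, d3x, d3y, d31⟩ :=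
    exists_path5 G hv12 hnadj hG.1 (hG.2 v1 v2 hv12 hnadj)
  have hw1 : w1 ∈ ({u, b2} : Set V) := by rw [← hN1]; exact a1
  have hw4 : w4 ∈ ({u, b2} : Set V) := by rw [← hN2]; exact a5.symm
  simp only [Set.mem_insert_iff, Set.mem_singleton_iff] at hw1 hw4
  have hw2N : ∀ z, G.Adj u z → z = v1 ∨ z = v2 ∨ z = b2 := by
    intro z hz
    have hz' : z ∈ ({v1, v2, b2} : Set V) := by rw [hNu]; exact hz
    simpa only [Set.mem_insert_iff, Set.mem_singleton_iff] using hz'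
  rcases hw1 with rfl | rfl <;> rcases hw4 with h4 | h4
  · exact d14 h4.symm
  · rcases hw2N w2 a2 with rfl | rfl | rfl
    · exact d2x rfl
    · exact d2y rfl
    · exact d24 h4.symm
  · rcases hw2N w3 (by rw [h4] at a4; exact a4.symm) with rfl | rfl | rfl
    · exact d3x rfl
    · exact d3y rfl
    · exact d31 rfl
  · exact d14 (by rw [h4])

/-- Lemma 3.4 of the paper. -/
theorem lemma_3_4 {V : Type*} [Fintype V] (n : ℕ) (hn : 6 ≤ n)
    (hcard : Fintype.card V = n) (G : SimpleGraph V) (hG : IsCSaturated 6 G)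
    (hmin : ∀ v, 2 ≤ degOf G v) (hex : ∃ v, degOf G v = 2)
    (hT2 : T2set G = ∅) :
    (∃ v, degOf G v = 2 ∧ ¬ InTriangle G v) ∨
      4 * (n : ℚ) / 3 - 2 ≤ (G.edgeSet.ncard : ℚ) := by
  classical
  by_cases hgood : ∃ v, degOf G v = 2 ∧ ¬ InTriangle G v
  · exact Or.inl hgood
  right
  push_neg at hgood
  have hdeg : ∀ v, degOf G v = G.degree v := by
    intro v
    rw [degOf, Set.ncard_eq_toFinset_card']
    congr 1
  set R : Finset V := Finset.univ.filter (fun v => degOf G v = 2) with hRdef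
  have hRmem : ∀ v, v ∈ R ↔ degOf G v = 2 := by intro v; simp [hRdef]
  have htri : ∀ v ∈ R, InTriangle G v := fun v hv => hgood v ((hRmem v).mp hv)
  have hnbr : ∀ v ∈ R, ∀ w, G.Adj v w → w ∉ R := by
    intro v hv w hw hwR
    have hvmem : v ∈ T2set G := ⟨(hRmem v).mp hv, htri v hv, w, hw, (hRmem w).mp hwR⟩
    rw [hT2] at hvmem
    exact hvmem
  have hfiber : ∀ v ∈ R, (Rᶜ.filter (fun u => G.Adj u v)).card = 2 := by
    intro v hv
    have heq : Rᶜ.filter (fun u => G.Adj u v) = G.neighborFinset v := by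
      ext u
      simp only [Finset.mem_filter, Finset.mem_compl, SimpleGraph.mem_neighborFinset]
      constructor
      · rintro ⟨-, h⟩; exact h.symm
      · intro h; exact ⟨hnbr v hv u h, h.symm⟩
    rw [heq, SimpleGraph.card_neighborFinset_eq_degree, ← hdeg]
    exact (hRmem v).mp hv
  have hdouble : ∑ u ∈ Rᶜ, (R.filter (fun v => G.Adj u v)).card = 2 * R.card := by
    have h1 : ∑ u ∈ Rᶜ, (R.filter (fun v => G.Adj u v)).card
        = ∑ u ∈ Rᶜ, ∑ v ∈ R, (if G.Adj u v then 1 else 0) := by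
      refine Finset.sum_congr rfl fun u _ => ?_
      rw [Finset.card_filter]
    have h2 : ∀ v ∈ R, ∑ u ∈ Rᶜ, (if G.Adj u v then 1 else 0) = 2 := by
      intro v hv
      rw [← Finset.card_filter]
      exact hfiber v hv
    rw [h1, Finset.sum_comm, Finset.sum_congr rfl h2, Finset.sum_const, smul_eq_mul, mul_comm]
  have hkey : ∀ u ∈ Rᶜ, 8 + (R.filter (fun v => G.Adj u v)).card ≤ 3 * G.degree u := by
    intro u hu
    have hu2 : G.degree u ≠ 2 := by
      intro h
      exact (Finset.mem_compl.mp hu) ((hRmem u).mpr (by rw [hdeg]; exact h))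
    have hd2 : 2 ≤ G.degree u := by rw [← hdeg]; exact hmin u
    by_cases hr1 : (R.filter (fun v => G.Adj u v)).card ≤ 1
    · omega
    push_neg at hr1
    obtain ⟨v1, hv1, v2, hv2, hv12⟩ := Finset.one_lt_card.mp hr1
    have hAv1 : G.Adj u v1 := (Finset.mem_filter.mp hv1).2
    have hRv1 : v1 ∈ R := (Finset.mem_filter.mp hv1).1
    have hAv2 : G.Adj u v2 := (Finset.mem_filter.mp hv2).2
    have hRv2 : v2 ∈ R := (Finset.mem_filter.mp hv2).1
    obtain ⟨b, hNb, hub, hadjb, hv1b, hbdeg⟩ :=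
      root_struct hT2 ((hRmem v1).mp hRv1) (htri v1 hRv1) hAv1.symm
    have hbfil : b ∉ R.filter (fun v => G.Adj u v) := by
      intro h
      exact hbdeg ((hRmem b).mp (Finset.mem_filter.mp h).1)
    have hge : (R.filter (fun v => G.Adj u v)).card + 1 ≤ G.degree u := by
      have hins : insert b (R.filter (fun v => G.Adj u v)) ⊆ G.neighborFinset u := by
        intro z hz
        rcases Finset.mem_insert.mp hz with rfl | hz'
        · exact (SimpleGraph.mem_neighborFinset _ _ _).mpr hadjb
        · exact (SimpleGraph.mem_neighborFinset _ _ _).mpr (Finset.mem_filter.mp hz').2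
      have hle := Finset.card_le_card hins
      rwa [Finset.card_insert_of_notMem hbfil, SimpleGraph.card_neighborFinset_eq_degree] at hle
    have hne3 : G.degree u ≠ 3 := by
      intro h3
      exact deg3_not_two_roots hG hT2 hAv1 hAv2 hv12 ((hRmem v1).mp hRv1) ((hRmem v2).mp hRv2)
        (htri v1 hRv1) (htri v2 hRv2) (by rw [hdeg]; exact h3)
    omega
  have hsum := G.sum_degrees_eq_twice_card_edges
  have hsplit : ∑ v ∈ R, G.degree v + ∑ v ∈ Rᶜ, G.degree v = ∑ v, G.degree v :=
    Finset.sum_add_sum_compl R _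
  have hRsum : ∑ v ∈ R, G.degree v = 2 * R.card := by
    have h2 : ∀ v ∈ R, G.degree v = 2 := fun v hv => by rw [← hdeg]; exact (hRmem v).mp hv
    rw [Finset.sum_congr rfl h2, Finset.sum_const, smul_eq_mul, mul_comm]
  have hNRsum : ∑ u ∈ Rᶜ, (8 + (R.filter (fun v => G.Adj u v)).card)
      ≤ ∑ u ∈ Rᶜ, 3 * G.degree u := Finset.sum_le_sum hkey
  have hNR1 : ∑ u ∈ Rᶜ, (8 + (R.filter (fun v => G.Adj u v)).card)
      = 8 * Rᶜ.card + 2 * R.card := by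
    rw [Finset.sum_add_distrib, Finset.sum_const, smul_eq_mul, hdouble, mul_comm]
  have h3sum : ∑ u ∈ Rᶜ, 3 * G.degree u = 3 * ∑ u ∈ Rᶜ, G.degree u :=
    (Finset.mul_sum _ _ _).symm
  have hc : Rᶜ.card = n - R.card := by rw [Finset.card_compl, hcard]
  have hkn : R.card ≤ n := by
    rw [← hcard, ← Finset.card_univ]
    exact Finset.card_le_univ R
  rw [hNR1, h3sum] at hNRsum
  rw [hsum] at hsplit
  have hfinal : 8 * n ≤ 6 * G.edgeFinset.card := by omega
  have hedge : G.edgeSet.ncard = G.edgeFinset.card := by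
    rw [Set.ncard_eq_toFinset_card']
    simp [SimpleGraph.edgeFinset]
  rw [hedge]
  have hq : (8 * n : ℚ) ≤ 6 * (G.edgeFinset.card : ℚ) := by exact_mod_cast hfinal
  linarith
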